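/- If ‖r‖ = 1, then ‖K(r,θ)† K(r,θ) − I‖_F² = 2ⁿ · Σ_{P∈G₂} φ_P(r,θ)², where ‖·‖_F is the Frobenius norm. In particular, if the orthogonality part of the cost satisfies Σ_{P∈G₂} φ_P(r,θ)² ≤ ε/2ⁿ, then ‖K(r,θ)† K(r,θ) − I‖_F ≤ √ε. -/

import Mathlib

open Matrix Complex
open scoped Classical

noncomputable section

/-- Single-qubit Pauli matrices: `0 ↦ I`, `1 ↦ X`, `2 ↦ Y`, `3 ↦ Z`. -/
def pauli1 (a : Fin 4) : Matrix (Fin 2) (Fin 2) ℂ :=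
  if a = 0 then 1
  else if a = 1 then !![0, 1; 1, 0]
  else if a = 2 then !![0, -Complex.I; Complex.I, 0]
  else !![1, 0; 0, -1]

/-- The `n`-qubit Pauli string `σ^{(1)} ⊗ ⋯ ⊗ σ^{(n)}` associated to `s : Fin n → Fin 4`,
realized as a matrix on the `(Fin n → Fin 2)`-indexed space of dimension `2^n`. -/
def pauliOp {n : ℕ} (s : Fin n → Fin 4) :
    Matrix (Fin n → Fin 2) (Fin n → Fin 2) ℂ :=
  Matrix.of fun i j => ∏ k, pauli1 (s k) (i k) (j k)

/-- `G₁`: the off-diagonal Pauli strings (some factor is `X` or `Y`). -/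
def G1 (n : ℕ) : Finset (Fin n → Fin 4) :=
  Finset.univ.filter fun s => ∃ k, s k = 1 ∨ s k = 2

/-- The diagonal Pauli strings (every factor is `I` or `Z`). -/
def DiagStrings (n : ℕ) : Finset (Fin n → Fin 4) :=
  Finset.univ.filter fun s => ∀ k, s k = 0 ∨ s k = 3

variable {n d : ℕ}

/-- `K(r,θ) = Σ_j r_j e^{iθ_j} P_j`. -/
def Kmat (P : Fin d → Fin n → Fin 4) (x : (Fin d → ℝ) × (Fin d → ℝ)) :
    Matrix (Fin n → Fin 2) (Fin n → Fin 2) ℂ :=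
  ∑ j, ((x.1 j : ℂ) * Complex.exp (Complex.I * (x.2 j : ℂ))) • pauliOp (P j)

/-- The cost function `f(r,θ) = Σ_{P ∈ G₁} tr(K(r,θ)† H K(r,θ) P)²` (the traces being real). -/
def costf (H : Matrix (Fin n → Fin 2) (Fin n → Fin 2) ℂ)
    (P : Fin d → Fin n → Fin 4) (x : (Fin d → ℝ) × (Fin d → ℝ)) : ℝ :=
  ∑ Q ∈ G1 n, (((Kmat P x)ᴴ * H * Kmat P x * pauliOp Q).trace.re) ^ 2

/-- `φ_P(r,θ) = 2^{-n} tr(K(r,θ)† K(r,θ) P)` (real). -/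
def phi (P : Fin d → Fin n → Fin 4) (Q : Fin n → Fin 4)
    (x : (Fin d → ℝ) × (Fin d → ℝ)) : ℝ :=
  (1 / 2 ^ n) * ((Kmat P x)ᴴ * Kmat P x * pauliOp Q).trace.re

/-- `G₂`: non-identity Pauli strings `Q` with `P_i P_j ∈ {Q, -Q, iQ, -iQ}` for some `i, j`. -/
def G2 (P : Fin d → Fin n → Fin 4) : Finset (Fin n → Fin 4) :=
  Finset.univ.filter fun Q => Q ≠ (fun _ => 0) ∧ ∃ i j : Fin d, ∃ c : ℂ,
    (c = 1 ∨ c = -1 ∨ c = Complex.I ∨ c = -Complex.I) ∧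
    pauliOp (P i) * pauliOp (P j) = c • pauliOp Q

/-- The total cost function `F = f + Σ_{P ∈ G₂} φ_P²`. -/
def totalF (H : Matrix (Fin n → Fin 2) (Fin n → Fin 2) ℂ)
    (P : Fin d → Fin n → Fin 4) (x : (Fin d → ℝ) × (Fin d → ℝ)) : ℝ :=
  costf H P x + ∑ Q ∈ G2 P, phi P Q x ^ 2

end

section MyAux
noncomputable section

def pm : Fin 4 → Fin 4 → Fin 4 := ![![0,1,2,3],![1,0,3,2],![2,3,0,1],![3,2,1,0]]
def pc : Fin 4 → Fin 4 → ℂ :=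
  ![![1,1,1,1],![1,1,Complex.I,-Complex.I],![1,-Complex.I,1,Complex.I],![1,Complex.I,-Complex.I,1]]

lemma pauli1_mul (a b : Fin 4) : pauli1 a * pauli1 b = pc a b • pauli1 (pm a b) := by
  fin_cases a <;> fin_cases b <;>
    simp [pauli1, pm, pc] <;>
    ext i j <;> fin_cases i <;> fin_cases j <;>
    simp [Matrix.mul_apply, Fin.sum_univ_two, Matrix.one_apply, Matrix.vecHead, Matrix.vecTail,
      Complex.ext_iff] <;> ring_nf <;> simp [Complex.ext_iff]

lemma pm_eq_zero_iff : ∀ a b : Fin 4, (pm a b = 0 ↔ a = b) := by decide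

lemma pc_diag (a : Fin 4) : pc a a = 1 := by fin_cases a <;> simp [pc]

lemma pc_pow_four (a b : Fin 4) : pc a b ^ 4 = 1 := by
  fin_cases a <;> fin_cases b <;> simp [pc, Matrix.vecHead, Matrix.vecTail] <;> norm_num [pow_succ, Complex.I_mul_I]

lemma pauli1_conj (a : Fin 4) (i j : Fin 2) :
    (starRingEnd ℂ) (pauli1 a j i) = pauli1 a i j := by
  fin_cases a <;> fin_cases i <;> fin_cases j <;> simp [pauli1, Matrix.one_apply]

lemma pauli1_complete (i j k l : Fin 2) :
    ∑ a : Fin 4, pauli1 a i j * pauli1 a k l = if i = l ∧ j = k then 2 else 0 := by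
  fin_cases i <;> fin_cases j <;> fin_cases k <;> fin_cases l <;>
    simp [Fin.sum_univ_four, pauli1, Matrix.one_apply] <;> ring_nf <;>
    simp [Complex.I_mul_I, Complex.I_sq] <;> ring

lemma pauli1_trace (a : Fin 4) : (pauli1 a).trace = if a = 0 then 2 else 0 := by
  fin_cases a <;> simp [pauli1, Matrix.trace, Matrix.diag, Fin.sum_univ_two] <;> norm_num

variable {n : ℕ}

lemma pauliOp_zero : pauliOp (fun _ : Fin n => (0 : Fin 4)) = 1 := by
  ext i j
  simp only [pauliOp, Matrix.of_apply, pauli1, if_pos rfl]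
  by_cases h : i = j
  · subst h; simp [Matrix.one_apply]
  · have : ∃ k, i k ≠ j k := by
      by_contra hc; push_neg at hc; exact h (funext hc)
    obtain ⟨k, hk⟩ := this
    rw [Matrix.one_apply_ne h]
    exact Finset.prod_eq_zero (Finset.mem_univ k) (Matrix.one_apply_ne hk)

lemma pauliOp_conjTranspose (s : Fin n → Fin 4) : (pauliOp s)ᴴ = pauliOp s := by
  ext i j
  simp only [Matrix.conjTranspose_apply, pauliOp, Matrix.of_apply, star_def, map_prod]
  exact Finset.prod_congr rfl fun k _ => pauli1_conj (s k) (i k) (j k)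

lemma pauliOp_mul (s t : Fin n → Fin 4) :
    pauliOp s * pauliOp t = (∏ k, pc (s k) (t k)) • pauliOp (fun k => pm (s k) (t k)) := by
  ext i j
  simp only [Matrix.mul_apply, pauliOp, Matrix.of_apply, Matrix.smul_apply, smul_eq_mul]
  calc ∑ l : Fin n → Fin 2, (∏ k, pauli1 (s k) (i k) (l k)) * ∏ k, pauli1 (t k) (l k) (j k)
      = ∑ l : Fin n → Fin 2, ∏ k, (pauli1 (s k) (i k) (l k) * pauli1 (t k) (l k) (j k)) := by
        simp [Finset.prod_mul_distrib]
    _ = ∏ k, ∑ v : Fin 2, pauli1 (s k) (i k) v * pauli1 (t k) v (j k) :=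
        (Fintype.prod_sum fun k v => pauli1 (s k) (i k) v * pauli1 (t k) v (j k)).symm
    _ = ∏ k, (pauli1 (s k) * pauli1 (t k)) (i k) (j k) := by
        simp [Matrix.mul_apply]
    _ = ∏ k, (pc (s k) (t k) * pauli1 (pm (s k) (t k)) (i k) (j k)) := by
        simp [pauli1_mul]
    _ = (∏ k, pc (s k) (t k)) * ∏ k, pauli1 (pm (s k) (t k)) (i k) (j k) := by
        rw [Finset.prod_mul_distrib]

lemma pauliOp_trace (s : Fin n → Fin 4) :
    (pauliOp s).trace = if s = (fun _ => 0) then (2 : ℂ) ^ n else 0 := by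
  have : (pauliOp s).trace = ∏ k, (pauli1 (s k)).trace := by
    simp only [Matrix.trace, Matrix.diag, pauliOp, Matrix.of_apply]
    rw [← Fintype.prod_sum fun k v => pauli1 (s k) v v]
  rw [this]
  by_cases h : s = fun _ => 0
  · subst h; simp [pauli1_trace]
  · have : ∃ k, s k ≠ 0 := by
      by_contra hc; push_neg at hc; exact h (funext hc)
    obtain ⟨k, hk⟩ := this
    rw [if_neg h]
    exact Finset.prod_eq_zero (Finset.mem_univ k) (by rw [pauli1_trace, if_neg hk])

lemma pauliOp_mul_trace (s t : Fin n → Fin 4) :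
    (pauliOp s * pauliOp t).trace = if s = t then (2 : ℂ) ^ n else 0 := by
  rw [pauliOp_mul, Matrix.trace_smul, pauliOp_trace, smul_eq_mul]
  by_cases h : s = t
  · subst h
    simp [pc_diag, funext_iff, pm_eq_zero_iff]
  · have h2 : ¬ (fun k => pm (s k) (t k)) = (fun _ => 0) := by
      simp only [funext_iff, pm_eq_zero_iff]
      exact fun hc => h (funext hc)
    simp [h, h2]

lemma pauliOp_complete (i j k l : Fin n → Fin 2) :
    ∑ s : Fin n → Fin 4, pauliOp s i j * pauliOp s k l =
      if i = l ∧ j = k then (2 : ℂ) ^ n else 0 := by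
  calc ∑ s : Fin n → Fin 4, pauliOp s i j * pauliOp s k l
      = ∑ s : Fin n → Fin 4, ∏ m, (pauli1 (s m) (i m) (j m) * pauli1 (s m) (k m) (l m)) := by
        simp [pauliOp, Finset.prod_mul_distrib]
    _ = ∏ m, ∑ a : Fin 4, pauli1 a (i m) (j m) * pauli1 a (k m) (l m) :=
        (Fintype.prod_sum fun m a => pauli1 a (i m) (j m) * pauli1 a (k m) (l m)).symm
    _ = ∏ m, (if i m = l m ∧ j m = k m then (2:ℂ) else 0) := by
        simp [pauli1_complete]
    _ = if i = l ∧ j = k then (2 : ℂ) ^ n else 0 := by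
        by_cases h : i = l ∧ j = k
        · obtain ⟨h1, h2⟩ := h; subst h1; subst h2; simp
        · rw [if_neg h]
          have : ∃ m, ¬ (i m = l m ∧ j m = k m) := by
            by_contra hc; push_neg at hc
            exact h ⟨funext fun m => (hc m).1, funext fun m => (hc m).2⟩
          obtain ⟨m, hm⟩ := this
          exact Finset.prod_eq_zero (Finset.mem_univ m) (if_neg hm)

lemma parseval {n : ℕ} (M : Matrix (Fin n → Fin 2) (Fin n → Fin 2) ℂ) (hM : Mᴴ = M) :
    ∑ s : Fin n → Fin 4, ((M * pauliOp s).trace) ^ 2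
      = (2:ℂ) ^ n * ∑ a, ∑ b, (‖M a b‖ : ℂ) ^ 2 := by
  have htr : ∀ s : Fin n → Fin 4, (M * pauliOp s).trace
      = ∑ p : (Fin n → Fin 2) × (Fin n → Fin 2), M p.1 p.2 * pauliOp s p.2 p.1 := by
    intro s
    rw [Fintype.sum_prod_type]
    simp [Matrix.trace, Matrix.diag, Matrix.mul_apply]
  calc ∑ s : Fin n → Fin 4, ((M * pauliOp s).trace) ^ 2
      = ∑ s : Fin n → Fin 4, ∑ p : (Fin n → Fin 2) × (Fin n → Fin 2),
          ∑ q : (Fin n → Fin 2) × (Fin n → Fin 2),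
          (M p.1 p.2 * pauliOp s p.2 p.1) * (M q.1 q.2 * pauliOp s q.2 q.1) := by
        refine Finset.sum_congr rfl fun s _ => ?_
        rw [htr s, sq, Finset.sum_mul_sum]
    _ = ∑ p : (Fin n → Fin 2) × (Fin n → Fin 2), ∑ q : (Fin n → Fin 2) × (Fin n → Fin 2),
          ∑ s : Fin n → Fin 4,
          (M p.1 p.2 * pauliOp s p.2 p.1) * (M q.1 q.2 * pauliOp s q.2 q.1) := by
        rw [Finset.sum_comm]
        exact Finset.sum_congr rfl fun p _ => Finset.sum_comm
    _ = ∑ p : (Fin n → Fin 2) × (Fin n → Fin 2), ∑ q : (Fin n → Fin 2) × (Fin n → Fin 2),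
          (M p.1 p.2 * M q.1 q.2) * (if p.2 = q.1 ∧ p.1 = q.2 then (2:ℂ)^n else 0) := by
        refine Finset.sum_congr rfl fun p _ => Finset.sum_congr rfl fun q _ => ?_
        rw [← pauliOp_complete p.2 p.1 q.2 q.1, Finset.mul_sum]
        exact Finset.sum_congr rfl fun s _ => by ring
    _ = ∑ p : (Fin n → Fin 2) × (Fin n → Fin 2), (M p.1 p.2 * M p.2 p.1) * (2:ℂ)^n := by
        refine Finset.sum_congr rfl fun p _ => ?_
        rw [Finset.sum_eq_single ((p.2, p.1) : (Fin n → Fin 2) × (Fin n → Fin 2))]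
        · simp
        · intro q _ hq
          have : ¬(p.2 = q.1 ∧ p.1 = q.2) := by
            rintro ⟨h1, h2⟩; exact hq (Prod.ext h1.symm h2.symm)
          simp [this]
        · intro hc; exact absurd (Finset.mem_univ _) hc
    _ = (2:ℂ) ^ n * ∑ a, ∑ b, (‖M a b‖ : ℂ) ^ 2 := by
        rw [Finset.mul_sum, Fintype.sum_prod_type]
        refine Finset.sum_congr rfl fun a _ => ?_
        rw [Finset.mul_sum]
        refine Finset.sum_congr rfl fun b _ => ?_
        have h1 : M b a = (starRingEnd ℂ) (M a b) := by
          conv_lhs => rw [← hM]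
          simp [Matrix.conjTranspose_apply]
        rw [h1, Complex.mul_conj]
        rw [Complex.normSq_eq_norm_sq]
        push_cast
        ring

lemma trace_herm_real {n : ℕ} (M Q : Matrix (Fin n → Fin 2) (Fin n → Fin 2) ℂ)
    (hM : Mᴴ = M) (hQ : Qᴴ = Q) : (M * Q).trace = (((M * Q).trace.re : ℝ) : ℂ) := by
  have h0 : ((M * Q)ᴴ).trace = (M * Q).trace := by
    rw [Matrix.conjTranspose_mul, hM, hQ, Matrix.trace_mul_comm]
  rw [Matrix.trace_conjTranspose] at h0
  exact (Complex.conj_eq_iff_re.mp h0).symm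

lemma fourth_root {c : ℂ} (h : c ^ 4 = 1) :
    c = 1 ∨ c = -1 ∨ c = Complex.I ∨ c = -Complex.I := by
  have h2 : (c - 1) * (c + 1) * (c - Complex.I) * (c + Complex.I) = 0 := by
    linear_combination h + (1 - c^2) * Complex.I_sq
  simp only [mul_eq_zero, sub_eq_zero, add_eq_zero_iff_eq_neg] at h2
  tauto

lemma KdagK_trace {n d : ℕ} (P : Fin d → Fin n → Fin 4) (x : (Fin d → ℝ) × (Fin d → ℝ))
    (Q : Fin n → Fin 4) :
    ((Kmat P x)ᴴ * Kmat P x * pauliOp Q).trace =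
      ∑ j, ∑ k, (starRingEnd ℂ) ((x.1 j : ℂ) * Complex.exp (Complex.I * (x.2 j : ℂ))) *
        ((x.1 k : ℂ) * Complex.exp (Complex.I * (x.2 k : ℂ))) *
        ((∏ m, pc (P j m) (P k m)) *
          (if (fun m => pm (P j m) (P k m)) = Q then (2:ℂ)^n else 0)) := by
  set α : Fin d → ℂ := fun j => (x.1 j : ℂ) * Complex.exp (Complex.I * (x.2 j : ℂ)) with hα
  have hK : Kmat P x = ∑ j, α j • pauliOp (P j) := rfl
  have hKH : (Kmat P x)ᴴ = ∑ j, (starRingEnd ℂ) (α j) • pauliOp (P j) := by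
    rw [hK, Matrix.conjTranspose_sum]
    refine Finset.sum_congr rfl fun j _ => ?_
    rw [Matrix.conjTranspose_smul, pauliOp_conjTranspose]
    rfl
  have expand : (Kmat P x)ᴴ * Kmat P x * pauliOp Q
      = ∑ j, ∑ k, ((starRingEnd ℂ) (α j) * α k) • ((pauliOp (P j) * pauliOp (P k)) * pauliOp Q) := by
    rw [hKH, hK, Finset.sum_mul, Finset.sum_mul]
    refine Finset.sum_congr rfl fun j _ => ?_
    rw [Finset.mul_sum, Finset.sum_mul]
    refine Finset.sum_congr rfl fun k _ => ?_
    simp [Matrix.smul_mul, Matrix.mul_smul, smul_smul, Matrix.mul_assoc, mul_comm]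
  rw [expand, Matrix.trace_sum]
  refine Finset.sum_congr rfl fun j _ => ?_
  rw [Matrix.trace_sum]
  refine Finset.sum_congr rfl fun k _ => ?_
  rw [pauliOp_mul, Matrix.smul_mul, Matrix.trace_smul, Matrix.trace_smul,
    pauliOp_mul_trace, smul_eq_mul, smul_eq_mul]

end
end MyAux

section Aux
variable {n d : ℕ}

lemma G2_ne_zero {P : Fin d → Fin n → Fin 4} {Q : Fin n → Fin 4} (hQ : Q ∈ G2 P) :
    Q ≠ (fun _ => 0) := ((Finset.mem_filter.mp hQ).2).1

end Aux

/-- if `‖r‖ = 1`, then `‖K†K − I‖_F² = 2ⁿ Σ_{P∈G₂} φ_P(r,θ)²`; in particular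
`Σ_{P∈G₂} φ_P² ≤ ε/2ⁿ` implies `‖K†K − I‖_F ≤ √ε`. -/
theorem statement11 {n d : ℕ} (hn : 1 ≤ n)
    (P : Fin d → Fin n → Fin 4) (hP : Function.Injective P)
    (x : (Fin d → ℝ) × (Fin d → ℝ)) (hx : ∑ j, x.1 j ^ 2 = 1) :
    (∑ i, ∑ j, ‖((Kmat P x)ᴴ * Kmat P x - 1) i j‖ ^ 2) =
      2 ^ n * ∑ Q ∈ G2 P, phi P Q x ^ 2 ∧
    ∀ ε : ℝ, (∑ Q ∈ G2 P, phi P Q x ^ 2) ≤ ε / 2 ^ n →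
      Real.sqrt (∑ i, ∑ j, ‖((Kmat P x)ᴴ * Kmat P x - 1) i j‖ ^ 2) ≤ Real.sqrt ε := by
  classical
  set M := (Kmat P x)ᴴ * Kmat P x - 1 with hMdef
  have hM : Mᴴ = M := by
    rw [hMdef, Matrix.conjTranspose_sub, Matrix.conjTranspose_mul,
      Matrix.conjTranspose_conjTranspose, Matrix.conjTranspose_one]
  set α : Fin d → ℂ := fun j => (x.1 j : ℂ) * Complex.exp (Complex.I * (x.2 j : ℂ)) with hα
  have hαsq : ∀ j, (starRingEnd ℂ) (α j) * α j = (((x.1 j) ^ 2 : ℝ) : ℂ) := by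
    intro j
    rw [mul_comm, Complex.mul_conj, hα]
    simp only
    rw [Complex.normSq_mul, Complex.normSq_ofReal, mul_comm Complex.I]
    rw [Complex.normSq_eq_norm_sq, Complex.norm_exp_ofReal_mul_I]
    push_cast; ring
  -- trace at the identity string
  have hid : ((Kmat P x)ᴴ * Kmat P x * pauliOp (fun _ => 0)).trace = (2:ℂ) ^ n := by
    rw [KdagK_trace P x (fun _ => 0)]
    have hstep : ∀ j : Fin d,
        (∑ k, (starRingEnd ℂ) (α j) * α k *
          ((∏ m, pc (P j m) (P k m)) *
            (if (fun m => pm (P j m) (P k m)) = (fun _ => 0) then (2:ℂ)^n else 0)))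
        = (((x.1 j) ^ 2 : ℝ) : ℂ) * (2:ℂ)^n := by
      intro j
      rw [Finset.sum_eq_single j]
      · have hc : (fun m => pm (P j m) (P j m)) = (fun _ : Fin n => (0 : Fin 4)) :=
          funext fun m => (pm_eq_zero_iff _ _).mpr rfl
        rw [if_pos hc, hαsq j]
        simp [pc_diag]
      · intro k _ hk
        have hc : ¬ (fun m => pm (P j m) (P k m)) = (fun _ : Fin n => (0 : Fin 4)) := by
          intro hc
          exact hk (hP (funext fun m => (pm_eq_zero_iff _ _).mp (congrFun hc m))).symm
        rw [if_neg hc, mul_zero, mul_zero]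
      · intro hc; exact absurd (Finset.mem_univ _) hc
    calc (∑ j, ∑ k, (starRingEnd ℂ) (α j) * α k *
          ((∏ m, pc (P j m) (P k m)) *
            (if (fun m => pm (P j m) (P k m)) = (fun _ => 0) then (2:ℂ)^n else 0)))
        = ∑ j, (((x.1 j) ^ 2 : ℝ) : ℂ) * (2:ℂ)^n := Finset.sum_congr rfl fun j _ => hstep j
      _ = (2:ℂ)^n := by
          rw [← Finset.sum_mul]
          have : (∑ j, (((x.1 j) ^ 2 : ℝ) : ℂ)) = 1 := by
            rw [← Complex.ofReal_sum]
            rw [hx]; norm_num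
          rw [this, one_mul]
  -- vanishing off G2 (for non-identity)
  have hvanish : ∀ Q, Q ∉ G2 P → Q ≠ (fun _ => 0) →
      ((Kmat P x)ᴴ * Kmat P x * pauliOp Q).trace = 0 := by
    intro Q hQ hQ0
    rw [KdagK_trace P x Q]
    refine Finset.sum_eq_zero fun j _ => Finset.sum_eq_zero fun k _ => ?_
    have hite : (if (fun m => pm (P j m) (P k m)) = Q then (2:ℂ)^n else 0) = 0 := by
      rw [if_neg]
      intro hc
      apply hQ
      rw [G2, Finset.mem_filter]
      refine ⟨Finset.mem_univ _, hQ0, j, k, ∏ m, pc (P j m) (P k m), ?_, ?_⟩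
      · apply fourth_root
        rw [← Finset.prod_pow]
        exact Finset.prod_eq_one fun m _ => pc_pow_four _ _
      · rw [pauliOp_mul, hc]
    rw [hite, mul_zero, mul_zero]
  -- the trace function of M
  have hT : ∀ Q : Fin n → Fin 4, (M * pauliOp Q).trace =
      ((Kmat P x)ᴴ * Kmat P x * pauliOp Q).trace - (if Q = (fun _ => 0) then (2:ℂ)^n else 0) := by
    intro Q
    rw [hMdef, Matrix.sub_mul, Matrix.trace_sub, Matrix.one_mul, pauliOp_trace]
  have hT0 : (M * pauliOp (fun _ => 0)).trace = 0 := by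
    rw [hT, hid, if_pos rfl, sub_self]
  have hTv : ∀ Q, Q ∉ G2 P → (M * pauliOp Q).trace = 0 := by
    intro Q hQ
    by_cases h0 : Q = (fun _ => 0)
    · rw [h0]; exact hT0
    · rw [hT, hvanish Q hQ h0, if_neg h0, sub_zero]
  have hTG2 : ∀ Q ∈ G2 P, (M * pauliOp Q).trace = (((2:ℝ)^n * phi P Q x : ℝ) : ℂ) := by
    intro Q hQ
    have h0 := G2_ne_zero hQ
    have h1 : (M * pauliOp Q).trace = ((Kmat P x)ᴴ * Kmat P x * pauliOp Q).trace := by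
      rw [hT, if_neg h0, sub_zero]
    have h2 := trace_herm_real M (pauliOp Q) hM (pauliOp_conjTranspose Q)
    rw [h2]
    congr 1
    have h3 : (M * pauliOp Q).trace.re = ((Kmat P x)ᴴ * Kmat P x * pauliOp Q).trace.re := by
      rw [h1]
    rw [h3, phi]
    have h2n : ((2:ℝ)^n) ≠ 0 := pow_ne_zero n two_ne_zero
    field_simp
  -- Parseval and assembly
  have hsum : (∑ s : Fin n → Fin 4, ((M * pauliOp s).trace) ^ 2)
      = ∑ s ∈ G2 P, ((M * pauliOp s).trace) ^ 2 :=
    (Finset.sum_subset (Finset.subset_univ _) fun s _ hs => by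
      rw [hTv s hs]; exact zero_pow two_ne_zero).symm
  have key : (2:ℂ)^n * ∑ a, ∑ b, (‖M a b‖ : ℂ)^2
      = (((2:ℝ)^n * ((2:ℝ)^n * ∑ Q ∈ G2 P, phi P Q x ^ 2) : ℝ) : ℂ) := by
    rw [← parseval M hM, hsum]
    push_cast
    rw [Finset.mul_sum, Finset.mul_sum]
    refine Finset.sum_congr rfl fun Q hQ => ?_
    rw [hTG2 Q hQ]
    push_cast; ring
  have hreal : (∑ a, ∑ b, ‖M a b‖ ^ 2) = 2 ^ n * ∑ Q ∈ G2 P, phi P Q x ^ 2 := by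
    have hcast : ((∑ a, ∑ b, ‖M a b‖ ^ 2 : ℝ) : ℂ) = ∑ a, ∑ b, (‖M a b‖ : ℂ)^2 := by
      push_cast; rfl
    rw [← hcast] at key
    have h3 : (2:ℝ)^n * (∑ a, ∑ b, ‖M a b‖ ^ 2)
        = (2:ℝ)^n * ((2:ℝ)^n * ∑ Q ∈ G2 P, phi P Q x ^ 2) := by
      exact_mod_cast key
    exact mul_left_cancel₀ (pow_ne_zero n two_ne_zero) h3
  refine ⟨hreal, ?_⟩
  intro ε hε
  apply Real.sqrt_le_sqrt
  rw [hreal]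
  calc (2:ℝ)^n * ∑ Q ∈ G2 P, phi P Q x ^ 2
      ≤ (2:ℝ)^n * (ε / 2^n) :=
        mul_le_mul_of_nonneg_left hε (by positivity)
    _ = ε := by field_simp
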